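/- Let A be a unital associative algebra with automorphism σ, and let S ⊆ Z(A) be a multiplicative submonoid of central elements that is stable under σ and σ^{-1}. Then the image of S in the skew Laurent ring A[x, x^{-1}; σ] is a right Ore set, and the right Ore localization of A[x, x^{-1}; σ] at S is isomorphic to A_S[x, x^{-1}; σ], the skew Laurent ring over the localization A_S. -/

import Mathlib

noncomputable section

open FreeAlgebra

/-- Generators for the skew Laurent polynomial ring `A[x,x⁻¹;σ]`. -/
inductive SLgen (A : Type) : Type
  | incl : A → SLgen A
  | x : SLgen A
  | xinv : SLgen A

variable (k : Type) [Field k] (A : Type) [Ring A] [Algebra k A]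

/-- Relations for the skew Laurent polynomial ring `A[x,x⁻¹;σ]`. -/
inductive SLrel (σ : A ≃ₐ[k] A) : FreeAlgebra k (SLgen A) → FreeAlgebra k (SLgen A) → Prop
  | add (a b : A) : SLrel σ (ι k (SLgen.incl (a + b))) (ι k (SLgen.incl a) + ι k (SLgen.incl b))
  | mul (a b : A) : SLrel σ (ι k (SLgen.incl (a * b))) (ι k (SLgen.incl a) * ι k (SLgen.incl b))
  | alg (c : k) : SLrel σ (ι k (SLgen.incl (algebraMap k A c))) (algebraMap k _ c)
  | xxinv : SLrel σ (ι k SLgen.x * ι k SLgen.xinv) 1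
  | xinvx : SLrel σ (ι k SLgen.xinv * ι k SLgen.x) 1
  | skew (a : A) : SLrel σ (ι k SLgen.x * ι k (SLgen.incl a)) (ι k (SLgen.incl (σ a)) * ι k SLgen.x)

/-- The skew Laurent polynomial ring `A[x,x⁻¹;σ]`. -/
abbrev SkewLaurent (σ : A ≃ₐ[k] A) : Type := RingQuot (SLrel k A σ)

variable (σ : A ≃ₐ[k] A)

/-- The canonical inclusion `A → A[x,x⁻¹;σ]`. -/
def SkewLaurent.incl (a : A) : SkewLaurent k A σ :=
  RingQuot.mkAlgHom k (SLrel k A σ) (ι k (SLgen.incl a))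

/-- The invertible generator `x` of `A[x,x⁻¹;σ]`. -/
def SkewLaurent.X : SkewLaurent k A σ :=
  RingQuot.mkAlgHom k (SLrel k A σ) (ι k SLgen.x)

/-- The inverse `x⁻¹` of the generator of `A[x,x⁻¹;σ]`. -/
def SkewLaurent.Xinv : SkewLaurent k A σ :=
  RingQuot.mkAlgHom k (SLrel k A σ) (ι k SLgen.xinv)

/-- Generators for a generalized Weyl algebra. -/
inductive Wgen (A : Type) : Type
  | incl : A → Wgen A
  | x : Wgen A
  | y : Wgen A

/-- Relations for the generalized Weyl algebra `W_{a,σ}`. -/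
inductive Wrel (σ : A ≃ₐ[k] A) (a : A) :
    FreeAlgebra k (Wgen A) → FreeAlgebra k (Wgen A) → Prop
  | add (u v : A) : Wrel σ a (ι k (Wgen.incl (u + v))) (ι k (Wgen.incl u) + ι k (Wgen.incl v))
  | mul (u v : A) : Wrel σ a (ι k (Wgen.incl (u * v))) (ι k (Wgen.incl u) * ι k (Wgen.incl v))
  | alg (c : k) : Wrel σ a (ι k (Wgen.incl (algebraMap k A c))) (algebraMap k _ c)
  | yx : Wrel σ a (ι k Wgen.y * ι k Wgen.x) (ι k (Wgen.incl a))
  | xy : Wrel σ a (ι k Wgen.x * ι k Wgen.y) (ι k (Wgen.incl (σ a)))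
  | xu (u : A) : Wrel σ a (ι k Wgen.x * ι k (Wgen.incl u)) (ι k (Wgen.incl (σ u)) * ι k Wgen.x)
  | yu (u : A) : Wrel σ a (ι k Wgen.y * ι k (Wgen.incl (σ u))) (ι k (Wgen.incl u) * ι k Wgen.y)

/-- The generalized Weyl algebra `W_{a,σ}`. -/
abbrev GWA (a : A) : Type := RingQuot (Wrel k A σ a)

/-- The canonical inclusion `A → W_{a,σ}`. -/
def GWA.incl (a : A) (u : A) : GWA k A σ a :=
  RingQuot.mkAlgHom k (Wrel k A σ a) (ι k (Wgen.incl u))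

/-- The generator `x` of `W_{a,σ}`. -/
def GWA.X (a : A) : GWA k A σ a :=
  RingQuot.mkAlgHom k (Wrel k A σ a) (ι k Wgen.x)

/-- The generator `y` of `W_{a,σ}`. -/
def GWA.Y (a : A) : GWA k A σ a :=
  RingQuot.mkAlgHom k (Wrel k A σ a) (ι k Wgen.y)



namespace SLAux

attribute [-simp] LaurentPolynomial.single_eq_C_mul_T

variable {k : Type} [Field k] {A : Type} [Ring A] [Algebra k A] (σ : A ≃ₐ[k] A)

local notation "SL" => SkewLaurent k A σ
local notation "inc" => SkewLaurent.incl k A σ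
local notation "XX" => SkewLaurent.X k A σ
local notation "XXinv" => SkewLaurent.Xinv k A σ

lemma incl_add (a b : A) : inc (a + b) = inc a + inc b := by
  simpa [SkewLaurent.incl, map_add] using RingQuot.mkAlgHom_rel k (SLrel.add (σ := σ) a b)

lemma incl_mul (a b : A) : inc (a * b) = inc a * inc b := by
  simpa [SkewLaurent.incl, map_mul] using RingQuot.mkAlgHom_rel k (SLrel.mul (σ := σ) a b)

lemma incl_alg (c : k) : inc (algebraMap k A c) = algebraMap k SL c := by
  simpa [SkewLaurent.incl] using RingQuot.mkAlgHom_rel k (SLrel.alg (σ := σ) c)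

/-- The inclusion `A → A[x,x⁻¹;σ]` as an algebra homomorphism. -/
def inclA : A →ₐ[k] SL where
  toFun := SkewLaurent.incl k A σ
  map_one' := by
    rw [show (1 : A) = algebraMap k A 1 by simp, incl_alg, map_one]
  map_mul' := incl_mul σ
  map_zero' := by
    show inc 0 = 0
    rw [show (0 : A) = algebraMap k A 0 by simp, incl_alg, map_zero]
  map_add' := incl_add σ
  commutes' := incl_alg σ

@[simp] lemma inclA_apply (a : A) : inclA σ a = inc a := rfl

lemma X_mul_incl (a : A) : XX * inc a = inc (σ a) * XX := by
  simpa [SkewLaurent.incl, SkewLaurent.X, map_mul] using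
    RingQuot.mkAlgHom_rel k (SLrel.skew (σ := σ) a)

lemma X_mul_Xinv : XX * XXinv = 1 := by
  simpa [SkewLaurent.X, SkewLaurent.Xinv, map_mul] using
    RingQuot.mkAlgHom_rel k (SLrel.xxinv (σ := σ))

lemma Xinv_mul_X : XXinv * XX = 1 := by
  simpa [SkewLaurent.X, SkewLaurent.Xinv, map_mul] using
    RingQuot.mkAlgHom_rel k (SLrel.xinvx (σ := σ))

/-- `x` as a unit. -/
def uX : (SL)ˣ := ⟨XX, XXinv, X_mul_Xinv σ, Xinv_mul_X σ⟩

/-- Integer powers of `x`. -/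
def Xz (n : ℤ) : SL := ((uX σ ^ n : (SL)ˣ) : SL)

@[simp] lemma Xz_zero : Xz σ 0 = 1 := by simp [Xz]

lemma Xz_add_one (n : ℤ) : Xz σ (n + 1) = Xz σ n * XX := by
  rw [Xz, zpow_add_one, Units.val_mul]; rfl

lemma Xz_sub_one (n : ℤ) : Xz σ (n - 1) = Xz σ n * XXinv := by
  rw [Xz, zpow_sub_one, Units.val_mul]; rfl

lemma Xinv_mul_incl (a : A) : XXinv * inc a = inc (σ.symm a) * XXinv := by
  have h := X_mul_incl σ (σ.symm a)
  rw [AlgEquiv.apply_symm_apply] at h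
  calc XXinv * inc a = XXinv * inc a * (XX * XXinv) := by rw [X_mul_Xinv, mul_one]
    _ = XXinv * (inc a * XX) * XXinv := by simp [mul_assoc]
    _ = XXinv * (XX * inc (σ.symm a)) * XXinv := by rw [← h]
    _ = (XXinv * XX) * inc (σ.symm a) * XXinv := by simp [mul_assoc]
    _ = inc (σ.symm a) * XXinv := by rw [Xinv_mul_X, one_mul]

lemma Xz_mul_incl (n : ℤ) (a : A) : Xz σ n * inc a = inc ((σ ^ n) a) * Xz σ n := by
  induction n using Int.induction_on generalizing a with
  | zero => simp
  | succ n ih =>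
      have e : (σ ^ ((n : ℤ) + 1)) a = (σ ^ (n : ℤ)) (σ a) := by
        rw [zpow_add_one, AlgEquiv.mul_apply]
      rw [Xz_add_one, mul_assoc, X_mul_incl, ← mul_assoc, ih, mul_assoc, ← Xz_add_one, e]
  | pred n ih =>
      have e : (σ ^ (-(n : ℤ) - 1)) a = (σ ^ (-(n : ℤ))) (σ.symm a) := by
        rw [zpow_sub_one, AlgEquiv.mul_apply]; rfl
      rw [show (-(n : ℤ) - 1) = (-(n : ℤ)) - 1 by ring, Xz_sub_one, mul_assoc, Xinv_mul_incl,
        ← mul_assoc, ih, mul_assoc, ← Xz_sub_one, ← e]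

@[simp] lemma incl_zero : inc 0 = 0 := (inclA σ).map_zero

@[simp] lemma incl_one : inc 1 = 1 := (inclA σ).map_one

lemma incl_smul (c : k) (a : A) : inc (c • a) = c • inc a := map_smul (inclA σ) c a

lemma zpow_cancel (n : ℤ) (a : A) : (σ ^ n) ((σ ^ (-n)) a) = a := by
  rw [← AlgEquiv.mul_apply, ← zpow_add]; simp

lemma zpow_shift (n : ℤ) (a : A) : (σ ^ (-(n + 1))) (σ a) = (σ ^ (-n)) a := by
  have h : (σ ^ (-(n + 1))) * σ = σ ^ (-n) := by
    rw [← zpow_add_one]; congr 1; ring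
  rw [← AlgEquiv.mul_apply, h]

lemma zpow_shift' (n : ℤ) (a : A) : (σ ^ (-(n - 1))) (σ.symm a) = (σ ^ (-n)) a := by
  have h : (σ ^ (-(n - 1))) * σ⁻¹ = σ ^ (-n) := by
    rw [← zpow_sub_one]; congr 1; ring
  rw [show σ.symm a = σ⁻¹ a from rfl, ← AlgEquiv.mul_apply, h]

/-! ### A representation on `ℤ →₀ A` giving a normal form -/

/-- Left multiplication operator for `incl a`. -/
def Lop (a : A) : Module.End k (ℤ →₀ A) :=
  Finsupp.lsum k fun n => Finsupp.lsingle n ∘ₗ LinearMap.mulLeft k ((σ ^ (-n)) a)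

/-- Shift operator for `x`. -/
def Sop : Module.End k (ℤ →₀ A) := Finsupp.lmapDomain A k (· + 1)

/-- Shift operator for `x⁻¹`. -/
def SopInv : Module.End k (ℤ →₀ A) := Finsupp.lmapDomain A k (· - 1)

@[simp] lemma Lop_single (a : A) (n : ℤ) (v : A) :
    Lop σ a (Finsupp.single n v) = Finsupp.single n ((σ ^ (-n)) a * v) := by
  simp [Lop]

@[simp] lemma Sop_single (n : ℤ) (v : A) :
    Sop (k := k) (A := A) (Finsupp.single n v) = Finsupp.single (n + 1) v := by
  simp [Sop, Finsupp.mapDomain_single]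

@[simp] lemma SopInv_single (n : ℤ) (v : A) :
    SopInv (k := k) (A := A) (Finsupp.single n v) = Finsupp.single (n - 1) v := by
  simp [SopInv, Finsupp.mapDomain_single]

lemma Lop_add (a b : A) : Lop σ (a + b) = Lop σ a + Lop σ b :=
  Finsupp.lhom_ext fun n v => by simp [map_add, add_mul]

lemma Lop_mul (a b : A) : Lop σ (a * b) = Lop σ a * Lop σ b :=
  Finsupp.lhom_ext fun n v => by
    rw [Module.End.mul_apply, Lop_single, Lop_single, Lop_single, map_mul, mul_assoc]

lemma Lop_algebraMap (c : k) :
    Lop σ (algebraMap k A c) = algebraMap k (Module.End k (ℤ →₀ A)) c :=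
  Finsupp.lhom_ext fun n v => by
    simp [AlgEquiv.commutes, Module.algebraMap_end_apply, Algebra.smul_def]

lemma Sop_SopInv : Sop (k := k) (A := A) * SopInv (k := k) (A := A) = 1 :=
  Finsupp.lhom_ext fun n v => by simp [Module.End.mul_apply]

lemma SopInv_Sop : SopInv (k := k) (A := A) * Sop (k := k) (A := A) = 1 :=
  Finsupp.lhom_ext fun n v => by simp [Module.End.mul_apply]

lemma Sop_Lop (a : A) : Sop * Lop σ a = Lop σ (σ a) * Sop :=
  Finsupp.lhom_ext fun n v => by
    rw [Module.End.mul_apply, Module.End.mul_apply, Lop_single, Sop_single, Sop_single,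
      Lop_single, zpow_shift]

/-- The representation of the skew Laurent ring on `ℤ →₀ A`. -/
def Ψ : SL →ₐ[k] Module.End k (ℤ →₀ A) :=
  RingQuot.liftAlgHom k
    ⟨FreeAlgebra.lift k fun g => match g with
      | SLgen.incl a => Lop σ a
      | SLgen.x => Sop
      | SLgen.xinv => SopInv,
     by
      intro x y h
      induction h with
      | add a b => simp [FreeAlgebra.lift_ι_apply, map_add, Lop_add]
      | mul a b => simp [FreeAlgebra.lift_ι_apply, map_mul, Lop_mul]
      | alg c => simp [FreeAlgebra.lift_ι_apply, Lop_algebraMap, AlgHom.commutes]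
      | xxinv => simp [FreeAlgebra.lift_ι_apply, map_mul, Sop_SopInv]
      | xinvx => simp [FreeAlgebra.lift_ι_apply, map_mul, SopInv_Sop]
      | skew a => simp [FreeAlgebra.lift_ι_apply, map_mul, Sop_Lop]⟩

@[simp] lemma Ψ_incl (a : A) : Ψ σ (inc a) = Lop σ a := by
  rw [SkewLaurent.incl, Ψ, RingQuot.liftAlgHom_mkAlgHom_apply, FreeAlgebra.lift_ι_apply]

@[simp] lemma Ψ_X : Ψ σ XX = Sop := by
  rw [SkewLaurent.X, Ψ, RingQuot.liftAlgHom_mkAlgHom_apply, FreeAlgebra.lift_ι_apply]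

@[simp] lemma Ψ_Xinv : Ψ σ XXinv = SopInv := by
  rw [SkewLaurent.Xinv, Ψ, RingQuot.liftAlgHom_mkAlgHom_apply, FreeAlgebra.lift_ι_apply]

/-- The coefficient family of an element of the skew Laurent ring. -/
def coeffs (d : SL) : ℤ →₀ A := Ψ σ d (Finsupp.single 0 1)

/-- Reassembling an element from a coefficient family. -/
def Θ (f : ℤ →₀ A) : SL := f.sum fun n v => Xz σ n * inc v

@[simp] lemma Θ_zero : Θ σ 0 = 0 := Finsupp.sum_zero_index

@[simp] lemma Θ_single (n : ℤ) (v : A) : Θ σ (Finsupp.single n v) = Xz σ n * inc v :=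
  Finsupp.sum_single_index (by simp)

lemma Θ_add (f g : ℤ →₀ A) : Θ σ (f + g) = Θ σ f + Θ σ g :=
  Finsupp.sum_add_index' (fun n => by simp) (fun n v w => by simp [incl_add, mul_add])

lemma Θ_smul (c : k) (f : ℤ →₀ A) : Θ σ (c • f) = c • Θ σ f := by
  induction f using Finsupp.induction_linear with
  | zero => simp
  | add f g hf hg => rw [smul_add, Θ_add, Θ_add, hf, hg, smul_add]
  | single n v =>
      rw [Finsupp.smul_single, Θ_single, Θ_single, incl_smul, mul_smul_comm]

lemma Θ_Lop (a : A) (f : ℤ →₀ A) : Θ σ (Lop σ a f) = inc a * Θ σ f := by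
  induction f using Finsupp.induction_linear with
  | zero => simp
  | add f g hf hg => rw [map_add, Θ_add, Θ_add, hf, hg, mul_add]
  | single n v =>
      rw [Lop_single, Θ_single, Θ_single, incl_mul, ← mul_assoc, Xz_mul_incl, zpow_cancel,
        mul_assoc]

lemma X_mul_Xz (n : ℤ) : XX * Xz σ n = Xz σ (n + 1) := by
  unfold Xz
  rw [show (n + 1 : ℤ) = 1 + n by ring, zpow_add, zpow_one, Units.val_mul]
  rfl

lemma Xinv_mul_Xz (n : ℤ) : XXinv * Xz σ n = Xz σ (n - 1) := by
  unfold Xz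
  rw [show (n - 1 : ℤ) = -1 + n by ring, zpow_add, zpow_neg_one, Units.val_mul]
  rfl

lemma Θ_Sop (f : ℤ →₀ A) : Θ σ (Sop (k := k) f) = XX * Θ σ f := by
  induction f using Finsupp.induction_linear with
  | zero => simp
  | add f g hf hg => rw [map_add, Θ_add, Θ_add, hf, hg, mul_add]
  | single n v =>
      rw [Sop_single, Θ_single, Θ_single, ← mul_assoc, X_mul_Xz]

lemma Θ_SopInv (f : ℤ →₀ A) : Θ σ (SopInv (k := k) f) = XXinv * Θ σ f := by
  induction f using Finsupp.induction_linear with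
  | zero => simp
  | add f g hf hg => rw [map_add, Θ_add, Θ_add, hf, hg, mul_add]
  | single n v =>
      rw [SopInv_single, Θ_single, Θ_single, ← mul_assoc, Xinv_mul_Xz]

lemma mul_Θ (d : SL) (f : ℤ →₀ A) : d * Θ σ f = Θ σ (Ψ σ d f) := by
  obtain ⟨z, rfl⟩ := RingQuot.mkAlgHom_surjective k _ d
  induction z using FreeAlgebra.induction generalizing f with
  | grade0 c =>
      rw [AlgHom.commutes, AlgHom.commutes, Module.algebraMap_end_apply, Θ_smul,
        Algebra.smul_def]
  | grade1 g =>
      cases g with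
      | incl a =>
          show inc a * Θ σ f = Θ σ (Ψ σ (inc a) f)
          rw [Ψ_incl, Θ_Lop]
      | x =>
          show XX * Θ σ f = Θ σ (Ψ σ XX f)
          rw [Ψ_X, Θ_Sop]
      | xinv =>
          show XXinv * Θ σ f = Θ σ (Ψ σ XXinv f)
          rw [Ψ_Xinv, Θ_SopInv]
  | mul z w hz hw =>
      rw [map_mul, map_mul, mul_assoc, hw, hz, Module.End.mul_apply]
  | add z w hz hw =>
      rw [map_add, map_add, add_mul, hz, hw, LinearMap.add_apply, Θ_add]

lemma Θ_coeffs (d : SL) : Θ σ (coeffs σ d) = d := by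
  rw [coeffs, ← mul_Θ, Θ_single, Xz_zero, incl_one, one_mul, mul_one]

lemma Ψ_Xz (n : ℤ) (m : ℤ) (v : A) :
    Ψ σ (Xz σ n) (Finsupp.single m v) = Finsupp.single (m + n) v := by
  induction n using Int.induction_on generalizing m with
  | zero => simp [Xz]
  | succ n ih =>
      rw [Xz_add_one, map_mul, Module.End.mul_apply, Ψ_X, Sop_single, ih]
      congr 1; ring
  | pred n ih =>
      rw [show (-(n : ℤ) - 1) = (-(n : ℤ)) - 1 by ring, Xz_sub_one, map_mul,
        Module.End.mul_apply, Ψ_Xinv, SopInv_single, ih]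
      congr 1; ring

lemma coeffs_Θ (f : ℤ →₀ A) : coeffs σ (Θ σ f) = f := by
  induction f using Finsupp.induction_linear with
  | zero => simp [coeffs]
  | add f g hf hg => rw [Θ_add, coeffs, map_add, LinearMap.add_apply]; exact congrArg₂ (· + ·) hf hg
  | single n v =>
      rw [Θ_single, coeffs, map_mul, Module.End.mul_apply, Ψ_incl, Lop_single, mul_one,
        neg_zero, zpow_zero, AlgEquiv.one_apply, Ψ_Xz, zero_add]

lemma Θ_mul_incl (f : ℤ →₀ A) (u : A) :
    Θ σ f * inc u = Θ σ (Finsupp.mapRange.linearMap (LinearMap.mulRight k u) f) := by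
  induction f using Finsupp.induction_linear with
  | zero => simp
  | add f g hf hg => rw [Θ_add, add_mul, hf, hg, map_add, Θ_add]
  | single n v =>
      rw [Θ_single, Finsupp.mapRange.linearMap_apply, Finsupp.mapRange_single, Θ_single,
        mul_assoc, ← incl_mul]
      rfl

section Ore

variable {S : Submonoid A}

lemma zpow_mem (hst : ∀ s ∈ S, σ s ∈ S) (hst' : ∀ s ∈ S, σ.symm s ∈ S)
    {s : A} (hs : s ∈ S) (n : ℤ) : (σ ^ n) s ∈ S := by
  induction n using Int.induction_on with
  | zero => simpa using hs
  | succ n ih =>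
      rw [show ((n : ℤ) + 1) = 1 + n by ring, zpow_add, zpow_one, AlgEquiv.mul_apply]
      exact hst _ ih
  | pred n ih =>
      rw [show (-(n : ℤ) - 1) = -1 + -n by ring, zpow_add, zpow_neg_one, AlgEquiv.mul_apply]
      exact hst' _ ih

lemma central_comm (hcen : (S : Set A) ⊆ Set.center A) {s : A} (hs : s ∈ S) (a : A) :
    a * s = s * a :=
  (Semigroup.mem_center_iff.mp (hcen hs)) a

lemma incl_comm_central (hcen : (S : Set A) ⊆ Set.center A) {s : A} (hs : s ∈ S) (a : A) :
    inc s * inc a = inc a * inc s := by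
  rw [← incl_mul, ← incl_mul, central_comm hcen hs a]

lemma ore_ex (hcen : (S : Set A) ⊆ Set.center A) (hst : ∀ s ∈ S, σ s ∈ S)
    (hst' : ∀ s ∈ S, σ.symm s ∈ S) (c : ℤ →₀ A) {s : A} (hs : s ∈ S) :
    ∃ s' ∈ S, ∃ r' : SL, inc s' * Θ σ c = r' * inc s := by
  induction c using Finsupp.induction_linear with
  | zero => exact ⟨s, hs, 0, by simp⟩
  | add f g hf hg =>
      obtain ⟨s₁, hs₁, r₁, h₁⟩ := hf
      obtain ⟨s₂, hs₂, r₂, h₂⟩ := hg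
      refine ⟨s₁ * s₂, mul_mem hs₁ hs₂, inc s₂ * r₁ + inc s₁ * r₂, ?_⟩
      rw [Θ_add, mul_add, add_mul]
      congr 1
      · rw [show s₁ * s₂ = s₂ * s₁ from central_comm hcen hs₂ s₁, incl_mul, mul_assoc, h₁,
          ← mul_assoc]
      · rw [incl_mul, mul_assoc, h₂, ← mul_assoc]
  | single n v =>
      refine ⟨(σ ^ n) s, zpow_mem σ hst hst' hs n, Θ σ (Finsupp.single n v), ?_⟩
      rw [Θ_single, ← mul_assoc, ← Xz_mul_incl σ n s, mul_assoc, ← incl_mul,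
        show s * v = v * s from (central_comm hcen hs v).symm, incl_mul, ← mul_assoc,
        mul_assoc]

lemma ore_cancel (hcen : (S : Set A) ⊆ Set.center A) (hst : ∀ s ∈ S, σ s ∈ S)
    (hst' : ∀ s ∈ S, σ.symm s ∈ S) (c : ℤ →₀ A) {s : A} (hs : s ∈ S)
    (h : ∀ m, c m * s = 0) :
    ∃ s' ∈ S, inc s' * Θ σ c = 0 := by
  induction c using Finsupp.induction with
  | zero => exact ⟨s, hs, by simp⟩
  | single_add n v f hnf hv ih =>
      have hf : ∀ m, f m * s = 0 := by
        intro m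
        by_cases hm : m = n
        · subst hm; rw [Finsupp.notMem_support_iff.mp hnf, zero_mul]
        · have hh := h m
          rwa [Finsupp.add_apply, Finsupp.single_apply, if_neg fun e => hm e.symm,
            zero_add] at hh
      have hv0 : v * s = 0 := by
        have hh := h n
        rwa [Finsupp.add_apply, Finsupp.single_eq_same, Finsupp.notMem_support_iff.mp hnf,
          add_zero] at hh
      obtain ⟨s₂, hs₂, h₂⟩ := ih hf
      refine ⟨s₂ * (σ ^ n) s, mul_mem hs₂ (zpow_mem σ hst hst' hs n), ?_⟩
      rw [Θ_add, mul_add]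
      have e₁ : inc (s₂ * (σ ^ n) s) * Θ σ (Finsupp.single n v) = 0 := by
        rw [incl_mul, Θ_single, mul_assoc, ← mul_assoc (inc ((σ ^ n) s)),
          ← Xz_mul_incl σ n s, mul_assoc, ← incl_mul,
          show s * v = v * s from (central_comm hcen hs v).symm, hv0, incl_zero]
        simp
      have e₂ : inc (s₂ * (σ ^ n) s) * Θ σ f = 0 := by
        rw [show s₂ * (σ ^ n) s = (σ ^ n) s * s₂ from
            central_comm hcen (zpow_mem σ hst hst' hs n) s₂, incl_mul, mul_assoc, h₂,
          mul_zero]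
      rw [e₁, e₂, add_zero]

end Ore

end SLAux

/-- The canonical monoid hom from a submonoid to the units of its Ore localization. -/
def numUnitHom {R : Type} [Ring R] (T : Submonoid R) [OreLocalization.OreSet T] :
    T →* (OreLocalization T R)ˣ where
  toFun := OreLocalization.numeratorUnit
  map_one' := Units.ext (by
    show OreLocalization.numeratorHom ((1 : T) : R) = 1
    simp
    exact OreLocalization.one_def.symm)
  map_mul' a b := Units.ext (by
    show OreLocalization.numeratorHom ((a * b : T) : R)
      = OreLocalization.numeratorHom (a : R) * OreLocalization.numeratorHom (b : R)
    simp)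

/-- Lift a monoid hom sending a submonoid to units to a hom into the unit group. -/
def unitsHomOfIsUnit {R B : Type} [Monoid R] [Monoid B] {T : Submonoid R} (f : R →* B)
    (h : ∀ t : T, IsUnit (f t)) : T →* Bˣ where
  toFun t := (h t).unit
  map_one' := Units.ext (by simp)
  map_mul' a b := Units.ext (by simp)

@[simp] lemma unitsHomOfIsUnit_val {R B : Type} [Monoid R] [Monoid B] {T : Submonoid R}
    (f : R →* B) (h : ∀ t : T, IsUnit (f t)) (t : T) :
    ((unitsHomOfIsUnit f h t : Bˣ) : B) = f t :=
  (h t).unit_spec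

/-- For a σ-stable multiplicative submonoid `S` of central elements of `A`,
the image of `S` in the skew Laurent ring `A[x,x⁻¹;σ]` is a right Ore set, and the Ore
localization of `A[x,x⁻¹;σ]` at (the submonoid generated by) this image is isomorphic to
the skew Laurent ring `A_S[x,x⁻¹;σ]` over the Ore localization `A_S`. -/
theorem skewLaurent_oreLocalization (S : Submonoid A) (hcen : (S : Set A) ⊆ Set.center A)
    (hst : ∀ s ∈ S, σ s ∈ S) (hst' : ∀ s ∈ S, σ.symm s ∈ S) :
    ∃ _hS : OreLocalization.OreSet S,
    ∃ _hT : OreLocalization.OreSet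
        (Submonoid.closure (SkewLaurent.incl k A σ '' (S : Set A))),
    ∃ τ : OreLocalization S A ≃ₐ[k] OreLocalization S A,
      (∀ u : A, τ (OreLocalization.numeratorRingHom u)
          = OreLocalization.numeratorRingHom (σ u)) ∧
      Nonempty
        (OreLocalization
            (Submonoid.closure (SkewLaurent.incl k A σ '' (S : Set A)))
            (SkewLaurent k A σ)
          ≃ₐ[k] SkewLaurent k (OreLocalization S A) τ) := by
  classical
  open SLAux OreLocalization in
  -- `S` is an Ore set in `A` since it is central
  letI oreS : OreLocalization.OreSet S :=
    { ore_right_cancel := fun r₁ r₂ s h =>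
        ⟨s, by rw [← central_comm hcen s.2 r₁, ← central_comm hcen s.2 r₂, h]⟩
      oreNum := fun r _ => r
      oreDenom := fun _ s => s
      ore_eq := fun r s => (central_comm hcen s.2 r).symm }
  set T := Submonoid.closure (SkewLaurent.incl k A σ '' (S : Set A)) with hTdef
  have memT : ∀ s ∈ S, SkewLaurent.incl k A σ s ∈ T := fun s hs =>
    Submonoid.subset_closure ⟨s, hs, rfl⟩
  have hT : ∀ t ∈ T, ∃ s ∈ S, SkewLaurent.incl k A σ s = t := by
    intro t ht
    have : T = S.map ((inclA σ).toRingHom : A →+* SkewLaurent k A σ).toMonoidHom := by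
      have h2 := MonoidHom.map_mclosure
        (((inclA σ).toRingHom : A →+* SkewLaurent k A σ).toMonoidHom) (S : Set A)
      rw [Submonoid.closure_eq] at h2
      rw [hTdef]
      exact h2.symm
    rw [this] at ht
    obtain ⟨s, hs, rfl⟩ := ht
    exact ⟨s, hs, rfl⟩
  -- the image of `S` is an Ore set in the skew Laurent ring
  have oreT' : Nonempty (OreLocalization.OreSet T) := by
    rw [OreLocalization.nonempty_oreSet_iff]
    constructor
    · rintro r₁ r₂ t h
      obtain ⟨s, hs, hst''⟩ := hT t t.2
      set d := r₁ - r₂ with hd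
      have hd0 : d * SkewLaurent.incl k A σ s = 0 := by
        rw [hd, sub_mul, sub_eq_zero, hst'', h]
      have hc : ∀ m, (coeffs σ d) m * s = 0 := by
        have h1 : Θ σ (coeffs σ d) * SkewLaurent.incl k A σ s = 0 := by
          rw [Θ_coeffs, hd0]
        rw [Θ_mul_incl] at h1
        have h2 := congrArg (coeffs σ) h1
        rw [coeffs_Θ] at h2
        simp only [coeffs, map_zero, LinearMap.zero_apply] at h2
        intro m
        have h3 := DFunLike.congr_fun h2 m
        simpa [coeffs] using h3
      obtain ⟨s', hs', h'⟩ := ore_cancel σ hcen hst hst' (coeffs σ d) hs hc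
      rw [Θ_coeffs] at h'
      refine ⟨⟨SkewLaurent.incl k A σ s', memT s' hs'⟩, ?_⟩
      show SkewLaurent.incl k A σ s' * r₁ = SkewLaurent.incl k A σ s' * r₂
      have := h'
      rw [hd, mul_sub, sub_eq_zero] at this
      exact this
    · intro r t
      obtain ⟨s, hs, hst''⟩ := hT t t.2
      obtain ⟨s', hs', r', h'⟩ := ore_ex σ hcen hst hst' (coeffs σ r) hs
      rw [Θ_coeffs] at h'
      exact ⟨r', ⟨SkewLaurent.incl k A σ s', memT s' hs'⟩, by
        show SkewLaurent.incl k A σ s' * r = r' * (t : SkewLaurent k A σ)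
        rw [← hst'']; exact h'⟩
  obtain ⟨oreT⟩ := oreT'
  refine ⟨oreS, oreT, ?_⟩
  -- the induced automorphism of the localization
  let fτ : A →+* OreLocalization S A :=
    OreLocalization.numeratorRingHom.comp ((σ : A ≃+* A) : A →+* A)
  let fτ' : A →+* OreLocalization S A :=
    OreLocalization.numeratorRingHom.comp ((σ.symm : A ≃+* A) : A →+* A)
  let fSτ : S →* (OreLocalization S A)ˣ :=
    { toFun := fun s => OreLocalization.numeratorUnit ⟨σ s, hst s s.2⟩
      map_one' := Units.ext (by
        show OreLocalization.numeratorHom (σ ((1 : S) : A)) = 1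
        simp
        exact OreLocalization.one_def.symm)
      map_mul' := fun a b => Units.ext (by
        show OreLocalization.numeratorHom (σ ((a * b : S) : A))
          = OreLocalization.numeratorHom (σ (a : A)) * OreLocalization.numeratorHom (σ (b : A))
        simp) }
  let fSτ' : S →* (OreLocalization S A)ˣ :=
    { toFun := fun s => OreLocalization.numeratorUnit ⟨σ.symm s, hst' s s.2⟩
      map_one' := Units.ext (by
        show OreLocalization.numeratorHom (σ.symm ((1 : S) : A)) = 1
        simp
        exact OreLocalization.one_def.symm)
      map_mul' := fun a b => Units.ext (by
        show OreLocalization.numeratorHom (σ.symm ((a * b : S) : A))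
          = OreLocalization.numeratorHom (σ.symm (a : A))
            * OreLocalization.numeratorHom (σ.symm (b : A))
        simp) }
  let τ₀ : OreLocalization S A →+* OreLocalization S A :=
    OreLocalization.universalHom fτ fSτ (fun s => rfl)
  let τ₀' : OreLocalization S A →+* OreLocalization S A :=
    OreLocalization.universalHom fτ' fSτ' (fun s => rfl)
  have hτcomm : ∀ r : A,
      τ₀ (OreLocalization.numeratorHom r) = OreLocalization.numeratorHom (σ r) := fun r =>
    OreLocalization.universalHom_commutes fτ fSτ (fun s => rfl)
  have hτcomm' : ∀ r : A,
      τ₀' (OreLocalization.numeratorHom r) = OreLocalization.numeratorHom (σ.symm r) := fun r =>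
    OreLocalization.universalHom_commutes fτ' fSτ' (fun s => rfl)
  have hid : ∀ χ : OreLocalization S A →+* OreLocalization S A,
      (∀ r, χ (OreLocalization.numeratorHom r) = OreLocalization.numeratorHom r) →
      ∀ x, χ x = x := by
    intro χ hχ x
    have e1 : χ = OreLocalization.universalHom OreLocalization.numeratorRingHom (numUnitHom S)
        (fun s => rfl) :=
      OreLocalization.universalHom_unique _ _ _ χ hχ
    have e2 : RingHom.id (OreLocalization S A)
        = OreLocalization.universalHom OreLocalization.numeratorRingHom (numUnitHom S)
        (fun s => rfl) :=
      OreLocalization.universalHom_unique _ _ _ _ (fun r => rfl)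
    rw [e1, ← e2]
    rfl
  have left : ∀ x, τ₀' (τ₀ x) = x := by
    intro x
    refine hid (τ₀'.comp τ₀) (fun r => ?_) x
    show τ₀' (τ₀ (OreLocalization.numeratorHom r)) = OreLocalization.numeratorHom r
    rw [hτcomm, hτcomm', AlgEquiv.symm_apply_apply]
  have right : ∀ x, τ₀ (τ₀' x) = x := by
    intro x
    refine hid (τ₀.comp τ₀') (fun r => ?_) x
    show τ₀ (τ₀' (OreLocalization.numeratorHom r)) = OreLocalization.numeratorHom r
    rw [hτcomm', hτcomm, AlgEquiv.apply_symm_apply]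
  let τ : OreLocalization S A ≃ₐ[k] OreLocalization S A :=
    { toFun := τ₀
      invFun := τ₀'
      left_inv := left
      right_inv := right
      map_mul' := τ₀.map_mul
      map_add' := τ₀.map_add
      commutes' := fun c => by
        show τ₀ (algebraMap k (OreLocalization S A) c) = algebraMap k (OreLocalization S A) c
        have e : algebraMap k (OreLocalization S A) c
            = OreLocalization.numeratorHom (algebraMap k A c) := rfl
        rw [e, hτcomm, AlgEquiv.commutes] }
  refine ⟨τ, fun u => hτcomm u, ?_⟩
  -- notation
  set AS := OreLocalization S A with hAS
  set Loc := OreLocalization T (SkewLaurent k A σ) with hLoc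
  let num : A →+* AS := OreLocalization.numeratorRingHom
  let numT : SkewLaurent k A σ →+* Loc := OreLocalization.numeratorRingHom
  -- the forward map on the skew Laurent ring
  let φgen : SLgen A → SkewLaurent k AS τ := fun g => match g with
    | SLgen.incl a => SkewLaurent.incl k AS τ (num a)
    | SLgen.x => SkewLaurent.X k AS τ
    | SLgen.xinv => SkewLaurent.Xinv k AS τ
  let φF : FreeAlgebra k (SLgen A) →ₐ[k] SkewLaurent k AS τ := FreeAlgebra.lift k φgen
  have hφF : ∀ g, φF (FreeAlgebra.ι k g) = φgen g := fun g => FreeAlgebra.lift_ι_apply φgen g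
  have hφrel : ∀ ⦃x y⦄, SLrel k A σ x y → φF x = φF y := by
    intro x y h
    induction h with
    | add a b =>
        rw [map_add, hφF, hφF, hφF]
        show SkewLaurent.incl k AS τ (num (a + b))
          = SkewLaurent.incl k AS τ (num a) + SkewLaurent.incl k AS τ (num b)
        rw [map_add, incl_add τ]
    | mul a b =>
        rw [map_mul, hφF, hφF, hφF]
        show SkewLaurent.incl k AS τ (num (a * b))
          = SkewLaurent.incl k AS τ (num a) * SkewLaurent.incl k AS τ (num b)
        rw [map_mul, incl_mul τ]
    | alg c =>
        rw [hφF, AlgHom.commutes]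
        show SkewLaurent.incl k AS τ (num (algebraMap k A c)) = _
        have e : num (algebraMap k A c) = algebraMap k AS c := rfl
        rw [e, incl_alg τ]
    | xxinv => rw [map_mul, hφF, hφF, map_one]; exact X_mul_Xinv τ
    | xinvx => rw [map_mul, hφF, hφF, map_one]; exact Xinv_mul_X τ
    | skew a =>
        rw [map_mul, map_mul]
        simp only [hφF]
        show SkewLaurent.X k AS τ * SkewLaurent.incl k AS τ (num a)
          = SkewLaurent.incl k AS τ (num (σ a)) * SkewLaurent.X k AS τ
        have e : τ (num a) = OreLocalization.numeratorHom (σ a) := hτcomm a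
        rw [X_mul_incl τ, e]
        rfl
  let φ : SkewLaurent k A σ →ₐ[k] SkewLaurent k AS τ := RingQuot.liftAlgHom k ⟨φF, hφrel⟩
  have hφmk : ∀ z, φ (RingQuot.mkAlgHom k (SLrel k A σ) z) = φF z := fun z =>
    RingQuot.liftAlgHom_mkAlgHom_apply k φF hφrel z
  have hφincl : ∀ a : A, φ (SkewLaurent.incl k A σ a) = SkewLaurent.incl k AS τ (num a) :=
    fun a => by
      show φ (RingQuot.mkAlgHom k (SLrel k A σ) (FreeAlgebra.ι k (SLgen.incl a))) = _
      rw [hφmk, hφF]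
  have hφX : φ (SkewLaurent.X k A σ) = SkewLaurent.X k AS τ := by
    show φ (RingQuot.mkAlgHom k (SLrel k A σ) (FreeAlgebra.ι k SLgen.x)) = _
    rw [hφmk, hφF]
  have hφXinv : φ (SkewLaurent.Xinv k A σ) = SkewLaurent.Xinv k AS τ := by
    show φ (RingQuot.mkAlgHom k (SLrel k A σ) (FreeAlgebra.ι k SLgen.xinv)) = _
    rw [hφmk, hφF]
  have hUnit : ∀ t : T, IsUnit (φ (t : SkewLaurent k A σ)) := by
    rintro ⟨t, ht⟩
    obtain ⟨s, hs, rfl⟩ := hT t ht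
    rw [hφincl]
    exact (OreLocalization.numerator_isUnit (⟨s, hs⟩ : S)).map (inclA τ)
  let fT : T →* (SkewLaurent k AS τ)ˣ := unitsHomOfIsUnit φ.toRingHom.toMonoidHom hUnit
  let Φ₀ : Loc →+* SkewLaurent k AS τ :=
    OreLocalization.universalHom φ.toRingHom fT (fun t => ((hUnit t).unit_spec).symm)
  have hΦnum : ∀ r, Φ₀ (OreLocalization.numeratorHom r) = φ r := fun r =>
    OreLocalization.universalHom_commutes φ.toRingHom fT (fun t => ((hUnit t).unit_spec).symm)
  -- the backward map on the coefficient ring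
  let g : A →+* Loc := numT.comp (inclA σ).toRingHom
  let gS : S →* Locˣ :=
    { toFun := fun s =>
        OreLocalization.numeratorUnit ⟨SkewLaurent.incl k A σ s, memT s s.2⟩
      map_one' := Units.ext (by
        show OreLocalization.numeratorHom (SkewLaurent.incl k A σ ((1 : S) : A)) = 1
        rw [OneMemClass.coe_one, incl_one σ, map_one])
      map_mul' := fun a b => Units.ext (by
        show OreLocalization.numeratorHom (SkewLaurent.incl k A σ ((a * b : S) : A))
          = OreLocalization.numeratorHom (SkewLaurent.incl k A σ (a : A))
            * OreLocalization.numeratorHom (SkewLaurent.incl k A σ (b : A))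
        rw [Submonoid.coe_mul, incl_mul σ, map_mul]) }
  let G : AS →+* Loc := OreLocalization.universalHom g gS (fun s => rfl)
  have hGnum : ∀ a : A,
      G (num a) = OreLocalization.numeratorHom (S := T) (SkewLaurent.incl k A σ a) :=
    fun a => OreLocalization.universalHom_commutes g gS (fun s => rfl)
  have hXG : ∀ a : A,
      OreLocalization.numeratorHom (S := T) (SkewLaurent.X k A σ)
          * OreLocalization.numeratorHom (S := T) (SkewLaurent.incl k A σ a)
        = OreLocalization.numeratorHom (S := T) (SkewLaurent.incl k A σ (σ a))
          * OreLocalization.numeratorHom (S := T) (SkewLaurent.X k A σ) := by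
    intro a
    rw [← map_mul, ← map_mul, X_mul_incl σ]
  have hskew : ∀ u : AS,
      OreLocalization.numeratorHom (SkewLaurent.X k A σ) * G u
        = G (τ u) * OreLocalization.numeratorHom (SkewLaurent.X k A σ) := by
    intro u
    induction u using OreLocalization.ind with
    | _ r s =>
      set numX := OreLocalization.numeratorHom (S := T) (SkewLaurent.X k A σ) with hnumX
      have hGdiv : G (r /ₒ s) = ↑(gS s)⁻¹ * g r :=
        OreLocalization.universalHom_apply g gS (fun s => rfl)
      have hτdiv : τ (r /ₒ s) = ↑(fSτ s)⁻¹ * fτ r :=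
        OreLocalization.universalHom_apply fτ fSτ (fun s => rfl)
      have hmapunit : Units.map G.toMonoidHom (fSτ s) = gS ⟨σ s, hst s s.2⟩ := Units.ext (by
        show G ((fSτ s : AS)) = _
        show G (num (σ (s : A))) = _
        rw [hGnum]
        rfl)
      have hGinv : G ((fSτ s)⁻¹ : (AS)ˣ) = ↑(gS ⟨σ s, hst s s.2⟩)⁻¹ := by
        rw [← hmapunit, Units.coe_map_inv]
        rfl
      have base : numX * ↑(gS s) = ↑(gS ⟨σ s, hst s s.2⟩) * numX := by
        show numX * OreLocalization.numeratorHom (SkewLaurent.incl k A σ (s : A)) = _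
        rw [hXG]
        rfl
      have key : numX * ↑(gS s)⁻¹ = ↑(gS ⟨σ s, hst s s.2⟩)⁻¹ * numX := by
        calc numX * ↑(gS s)⁻¹
            = ↑(gS ⟨σ s, hst s s.2⟩)⁻¹ * (↑(gS ⟨σ s, hst s s.2⟩) * (numX * ↑(gS s)⁻¹)) :=
              (Units.inv_mul_cancel_left _ _).symm
          _ = ↑(gS ⟨σ s, hst s s.2⟩)⁻¹ * ((↑(gS ⟨σ s, hst s s.2⟩) * numX) * ↑(gS s)⁻¹) := by
              rw [mul_assoc]
          _ = ↑(gS ⟨σ s, hst s s.2⟩)⁻¹ * ((numX * ↑(gS s)) * ↑(gS s)⁻¹) := by rw [base]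
          _ = ↑(gS ⟨σ s, hst s s.2⟩)⁻¹ * numX := by rw [Units.mul_inv_cancel_right]
      have hgfr : G (fτ r) = g (σ r) := hGnum (σ r)
      have hXg : numX * g r = g (σ r) * numX := hXG r
      calc numX * G (r /ₒ s) = numX * (↑(gS s)⁻¹ * g r) := by rw [hGdiv]
        _ = (numX * ↑(gS s)⁻¹) * g r := by rw [mul_assoc]
        _ = (↑(gS ⟨σ s, hst s s.2⟩)⁻¹ * numX) * g r := by rw [key]
        _ = ↑(gS ⟨σ s, hst s s.2⟩)⁻¹ * (numX * g r) := by rw [mul_assoc]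
        _ = ↑(gS ⟨σ s, hst s s.2⟩)⁻¹ * (g (σ r) * numX) := by rw [hXg]
        _ = (↑(gS ⟨σ s, hst s s.2⟩)⁻¹ * g (σ r)) * numX := by rw [mul_assoc]
        _ = G (τ (r /ₒ s)) * numX := by rw [hτdiv, map_mul, hGinv, hgfr]
  -- the backward map
  let ψgen : SLgen AS → Loc := fun g => match g with
    | SLgen.incl u => G u
    | SLgen.x => OreLocalization.numeratorHom (SkewLaurent.X k A σ)
    | SLgen.xinv => OreLocalization.numeratorHom (SkewLaurent.Xinv k A σ)
  let ψF : FreeAlgebra k (SLgen AS) →ₐ[k] Loc := FreeAlgebra.lift k ψgen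
  have hψF : ∀ g, ψF (FreeAlgebra.ι k g) = ψgen g := fun g => FreeAlgebra.lift_ι_apply ψgen g
  have hψrel : ∀ ⦃x y⦄, SLrel k AS τ x y → ψF x = ψF y := by
    intro x y h
    induction h with
    | add a b => rw [map_add, hψF, hψF, hψF]; show G _ = G _ + G _; rw [map_add]
    | mul a b => rw [map_mul, hψF, hψF, hψF]; show G _ = G _ * G _; rw [map_mul]
    | alg c =>
        rw [hψF, AlgHom.commutes]
        show G (algebraMap k AS c) = algebraMap k Loc c
        have e : algebraMap k AS c = num (algebraMap k A c) := rfl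
        rw [e, hGnum, incl_alg σ]
        rfl
    | xxinv =>
        rw [map_mul, hψF, hψF, map_one]
        show OreLocalization.numeratorHom (SkewLaurent.X k A σ)
          * OreLocalization.numeratorHom (SkewLaurent.Xinv k A σ) = 1
        rw [← map_mul, X_mul_Xinv σ, map_one]
    | xinvx =>
        rw [map_mul, hψF, hψF, map_one]
        show OreLocalization.numeratorHom (SkewLaurent.Xinv k A σ)
          * OreLocalization.numeratorHom (SkewLaurent.X k A σ) = 1
        rw [← map_mul, Xinv_mul_X σ, map_one]
    | skew u =>
        rw [map_mul, map_mul]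
        simp only [hψF]
        exact hskew u
  let ψ : SkewLaurent k AS τ →ₐ[k] Loc := RingQuot.liftAlgHom k ⟨ψF, hψrel⟩
  have hψmk : ∀ z, ψ (RingQuot.mkAlgHom k (SLrel k AS τ) z) = ψF z := fun z =>
    RingQuot.liftAlgHom_mkAlgHom_apply k ψF hψrel z
  have hψincl : ∀ u : AS, ψ (SkewLaurent.incl k AS τ u) = G u := fun u => by
    show ψ (RingQuot.mkAlgHom k (SLrel k AS τ) (FreeAlgebra.ι k (SLgen.incl u))) = _
    rw [hψmk, hψF]
  have hψX : ψ (SkewLaurent.X k AS τ) = OreLocalization.numeratorHom (SkewLaurent.X k A σ) := by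
    show ψ (RingQuot.mkAlgHom k (SLrel k AS τ) (FreeAlgebra.ι k SLgen.x)) = _
    rw [hψmk, hψF]
  have hψXinv : ψ (SkewLaurent.Xinv k AS τ)
      = OreLocalization.numeratorHom (SkewLaurent.Xinv k A σ) := by
    show ψ (RingQuot.mkAlgHom k (SLrel k AS τ) (FreeAlgebra.ι k SLgen.xinv)) = _
    rw [hψmk, hψF]
  -- ψ ∘ φ is the numerator map
  have hψφ : ∀ r : SkewLaurent k A σ, ψ (φ r) = numT r := by
    intro r
    obtain ⟨z, rfl⟩ := RingQuot.mkAlgHom_surjective k _ r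
    induction z using FreeAlgebra.induction with
    | grade0 c => rw [AlgHom.commutes, AlgHom.commutes, AlgHom.commutes]; rfl
    | grade1 g =>
        cases g with
        | incl a =>
            show ψ (φ (SkewLaurent.incl k A σ a)) = numT (SkewLaurent.incl k A σ a)
            rw [hφincl, hψincl, hGnum]
            rfl
        | x =>
            show ψ (φ (SkewLaurent.X k A σ)) = numT (SkewLaurent.X k A σ)
            rw [hφX, hψX]
            rfl
        | xinv =>
            show ψ (φ (SkewLaurent.Xinv k A σ)) = numT (SkewLaurent.Xinv k A σ)
            rw [hφXinv, hψXinv]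
            rfl
    | mul a b ha hb => rw [map_mul, map_mul, map_mul, ha, hb, map_mul]
    | add a b ha hb => rw [map_add, map_add, map_add, ha, hb, map_add]
  -- ψ ∘ Φ₀ = id
  have hψΦ : ∀ x : Loc, ψ (Φ₀ x) = x := by
    have e1 : ψ.toRingHom.comp Φ₀
        = OreLocalization.universalHom numT (numUnitHom T) (fun t => rfl) :=
      OreLocalization.universalHom_unique _ _ _ _ (fun r => by
        show ψ (Φ₀ (OreLocalization.numeratorHom r)) = numT r
        rw [hΦnum, hψφ])
    have e2 : RingHom.id Loc
        = OreLocalization.universalHom numT (numUnitHom T) (fun t => rfl) :=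
      OreLocalization.universalHom_unique _ _ _ _ (fun r => rfl)
    intro x
    calc ψ (Φ₀ x) = (ψ.toRingHom.comp Φ₀) x := rfl
      _ = x := by rw [e1, ← e2]; rfl
  -- Φ₀ is an algebra map
  have hΦalg : ∀ c : k, Φ₀ (algebraMap k Loc c) = algebraMap k (SkewLaurent k AS τ) c := by
    intro c
    have e : algebraMap k Loc c
        = OreLocalization.numeratorHom (algebraMap k (SkewLaurent k A σ) c) := rfl
    rw [e, hΦnum, AlgHom.commutes]
  -- Φ₀ ∘ G is the inclusion
  have hΦG : ∀ u : AS, Φ₀ (G u) = SkewLaurent.incl k AS τ u := by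
    let fB : A →+* SkewLaurent k AS τ := (inclA τ).toRingHom.comp num
    let fSB : S →* (SkewLaurent k AS τ)ˣ :=
      (Units.map (inclA τ).toRingHom.toMonoidHom).comp (numUnitHom S)
    have hfB : ∀ s : S, fB s = ((fSB s : (SkewLaurent k AS τ)ˣ) : SkewLaurent k AS τ) :=
      fun s => rfl
    have e1 : Φ₀.comp G = OreLocalization.universalHom fB fSB hfB :=
      OreLocalization.universalHom_unique _ _ _ _ (fun a => by
        show Φ₀ (G (num a)) = fB a
        rw [hGnum, hΦnum, hφincl]
        rfl)
    have e2 : (inclA τ).toRingHom = OreLocalization.universalHom fB fSB hfB :=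
      OreLocalization.universalHom_unique _ _ _ _ (fun a => rfl)
    intro u
    calc Φ₀ (G u) = (Φ₀.comp G) u := rfl
      _ = (inclA τ).toRingHom u := by rw [e1, ← e2]
      _ = SkewLaurent.incl k AS τ u := rfl
  -- Φ₀ ∘ ψ = id
  have hΦψ : ∀ y : SkewLaurent k AS τ, Φ₀ (ψ y) = y := by
    intro y
    obtain ⟨z, rfl⟩ := RingQuot.mkAlgHom_surjective k _ y
    induction z using FreeAlgebra.induction with
    | grade0 c => rw [AlgHom.commutes, AlgHom.commutes, hΦalg]
    | grade1 g =>
        cases g with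
        | incl u =>
            show Φ₀ (ψ (SkewLaurent.incl k AS τ u)) = SkewLaurent.incl k AS τ u
            rw [hψincl, hΦG]
        | x =>
            show Φ₀ (ψ (SkewLaurent.X k AS τ)) = SkewLaurent.X k AS τ
            rw [hψX, hΦnum, hφX]
        | xinv =>
            show Φ₀ (ψ (SkewLaurent.Xinv k AS τ)) = SkewLaurent.Xinv k AS τ
            rw [hψXinv, hΦnum, hφXinv]
    | mul a b ha hb => rw [map_mul, map_mul, map_mul, ha, hb]
    | add a b ha hb => rw [map_add, map_add, map_add, ha, hb]
  exact ⟨{ toFun := ⇑Φ₀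
           invFun := ⇑ψ
           left_inv := hψΦ
           right_inv := hΦψ
           map_mul' := Φ₀.map_mul
           map_add' := Φ₀.map_add
           commutes' := hΦalg }⟩

end
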